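/- Let β ≥ 0 and λ, μ > 0. Then there exists a real 1×3 matrix S = (σ₁, σ₂, σ₃) such that every eigenvalue of A - BS has absolute value less than 1, where A has rows (1, λ-μ+βμ², β(λ-μ)μ), (0, βμ, β(λ-μ)), (0, 1, 0) and B = (μ, 1, 0)ᵀ. Consequently, for every initial state z₀, the feedback-controlled system z_{n+1} = (A - BS) z_n satisfies z_n → 0. -/

import Mathlib

open Filter

/-- Market stabilization: some linear feedback `S` places all eigenvalues of
`A - BS` inside the unit disk, and the closed-loop state converges to zero. -/
theorem stmt_12 (beta lam mu : ℝ) (hbeta : 0 ≤ beta) (hlam : 0 < lam) (hmu : 0 < mu)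
    (A : Matrix (Fin 3) (Fin 3) ℝ)
    (hA : A = !![1, lam - mu + beta * mu ^ 2, beta * (lam - mu) * mu;
                 0, beta * mu, beta * (lam - mu);
                 0, 1, 0])
    (B : Matrix (Fin 3) (Fin 1) ℝ) (hB : B = !![mu; 1; 0]) :
    ∃ S : Matrix (Fin 1) (Fin 3) ℝ,
      (∀ phi : ℂ, ((A - B * S).map (Complex.ofReal ·)).charpoly.IsRoot phi →
        ‖phi‖ < 1) ∧
      (∀ z0 : Fin 3 → ℝ,
        Tendsto (fun n : ℕ => ((A - B * S) ^ n).mulVec z0) atTop (nhds 0)) := by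
  have hlam' : lam ≠ 0 := hlam.ne'
  set S : Matrix (Fin 1) (Fin 3) ℝ :=
    !![1 / lam, -mu / lam + beta * mu + 1, beta * (lam - mu)] with hS
  have hM : A - B * S =
      !![1 - mu / lam, (lam - mu) ^ 2 / lam, 0;
         -(1 / lam), mu / lam - 1, 0;
         0, 1, 0] := by
    subst hA hB
    ext i j
    fin_cases i <;> fin_cases j <;>
      · simp [hS, Matrix.mul_apply, Fin.sum_univ_one, Matrix.vecHead, Matrix.vecTail]
        try field_simp
        try ring
  have h2 : (!![1 - mu / lam, (lam - mu) ^ 2 / lam, 0;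
         -(1 / lam), mu / lam - 1, 0;
         0, 1, 0] : Matrix (Fin 3) (Fin 3) ℝ) *
      !![1 - mu / lam, (lam - mu) ^ 2 / lam, 0;
         -(1 / lam), mu / lam - 1, 0;
         0, 1, 0] = !![0, 0, 0; 0, 0, 0; -(1 / lam), mu / lam - 1, 0] := by
    ext i j
    fin_cases i <;> fin_cases j <;>
      · simp [Matrix.mul_apply, Fin.sum_univ_three, Matrix.vecHead, Matrix.vecTail]
        try field_simp
        try ring
  have h3 : (A - B * S) ^ 3 = 0 := by
    rw [pow_succ, pow_succ, pow_one, hM, h2]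
    ext i j
    fin_cases i <;> fin_cases j <;>
      · simp [Matrix.mul_apply, Fin.sum_univ_three, Matrix.vecHead, Matrix.vecTail]
        try field_simp
        try ring
  refine ⟨S, ?_, ?_⟩
  · intro phi hphi
    have hmap : ((A - B * S).map (Complex.ofReal ·)) ^ 3 = 0 := by
      have : (Complex.ofRealHom.mapMatrix (A - B * S)) ^ 3 =
          Complex.ofRealHom.mapMatrix ((A - B * S) ^ 3) :=
        (map_pow Complex.ofRealHom.mapMatrix (A - B * S) 3).symm
      simp [RingHom.mapMatrix_apply, h3] at this
      exact this
    have hnil : IsNilpotent ((A - B * S).map (Complex.ofReal ·)) := ⟨3, hmap⟩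
    have hch := Matrix.isNilpotent_charpoly_sub_pow_of_isNilpotent hnil
    have hcp : ((A - B * S).map (Complex.ofReal ·)).charpoly = Polynomial.X ^ 3 := by
      have := hch.eq_zero
      simpa [Fintype.card_fin, sub_eq_zero] using this
    rw [hcp] at hphi
    have h0 : phi ^ 3 = 0 := by simpa [Polynomial.IsRoot] using hphi
    have : phi = 0 := pow_eq_zero_iff (n := 3) (by norm_num) |>.mp h0
    simp [this]
  · intro z0
    apply tendsto_atTop_of_eventually_const (i₀ := 3)
    intro n hn
    have hzero : (A - B * S) ^ n = 0 := by
      have : (A - B * S) ^ n = (A - B * S) ^ 3 * (A - B * S) ^ (n - 3) := by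
        rw [← pow_add]; congr 1; omega
      rw [this, h3, zero_mul]
    simp [hzero]
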